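/- Let P, Q be probability mass functions on a finite set A with P(a), Q(a) > 0 for all a and P ≠ Q. Let ζ = exp(D_∞(P‖Q)) where D_∞(P‖Q) = log(max_a P(a)/Q(a)). Then KL(P‖Q) ≤ κ₁(ζ)·KL(Q‖P), where κ₁(t) = (t·log t + 1 − t)/((t − 1) − log t). -/

import Mathlib

open Real Set

lemma log_ge_one_sub_inv {x : ℝ} (hx : 0 < x) : 1 - 1/x ≤ Real.log x := by
  have h := Real.log_le_sub_one_of_pos (x := 1/x) (by positivity)
  rw [one_div, Real.log_inv] at h
  have : (1:ℝ)/x = x⁻¹ := one_div x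
  linarith [h, this.ge]

lemma hasDerivAt_G (c : ℝ) {x : ℝ} (hx : 0 < x) :
    HasDerivAt (fun y => c*(y - 1 - Real.log y) - (y*Real.log y - y + 1))
      (c*(1 - 1/x) - Real.log x) x := by
  have hl := Real.hasDerivAt_log hx.ne'
  have h1 : HasDerivAt (fun y => y - 1 - Real.log y) (1 - x⁻¹) x :=
    (((hasDerivAt_id x).sub_const 1).sub hl)
  have h2 : HasDerivAt (fun y : ℝ => y * Real.log y) (1 * Real.log x + x * x⁻¹) x :=
    (hasDerivAt_id x).mul hl
  have h3 : HasDerivAt (fun y : ℝ => y * Real.log y - y + 1)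
      (1 * Real.log x + x * x⁻¹ - 1) x := (h2.sub (hasDerivAt_id x)).add_const 1
  have := (h1.const_mul c).sub h3
  refine this.congr_deriv ?_
  rw [mul_inv_cancel₀ hx.ne']
  field_simp
  ring

lemma contG {c a b : ℝ} (ha : 0 < a) :
    ContinuousOn (fun y => c*(y - 1 - Real.log y) - (y*Real.log y - y + 1)) (Set.Icc a b) := by
  have hlog : ContinuousOn Real.log (Set.Icc a b) :=
    Real.continuousOn_log.mono (fun x hx => by
      simp only [Set.mem_compl_iff, Set.mem_singleton_iff]
      exact ne_of_gt (lt_of_lt_of_le ha hx.1))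
  exact (continuousOn_const.mul ((continuousOn_id.sub continuousOn_const).sub hlog)).sub
    (((continuousOn_id.mul hlog).sub continuousOn_id).add continuousOn_const)

lemma G_mono {c a b : ℝ} (ha : 0 < a)
    (hd : ∀ x ∈ Set.Ioo a b, 0 ≤ c*(1 - 1/x) - Real.log x) :
    MonotoneOn (fun y => c*(y - 1 - Real.log y) - (y*Real.log y - y + 1)) (Set.Icc a b) := by
  apply monotoneOn_of_deriv_nonneg (convex_Icc a b) (contG ha)
  · rw [interior_Icc]
    exact fun x hx => ((hasDerivAt_G c (ha.trans hx.1)).differentiableAt).differentiableWithinAt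
  · rw [interior_Icc]
    intro x hx
    rw [(hasDerivAt_G c (ha.trans hx.1)).deriv]
    exact hd x hx

lemma G_anti {c a b : ℝ} (ha : 0 < a)
    (hd : ∀ x ∈ Set.Ioo a b, c*(1 - 1/x) - Real.log x ≤ 0) :
    AntitoneOn (fun y => c*(y - 1 - Real.log y) - (y*Real.log y - y + 1)) (Set.Icc a b) := by
  apply antitoneOn_of_deriv_nonpos (convex_Icc a b) (contG ha)
  · rw [interior_Icc]
    exact fun x hx => ((hasDerivAt_G c (ha.trans hx.1)).differentiableAt).differentiableWithinAt
  · rw [interior_Icc]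
    intro x hx
    rw [(hasDerivAt_G c (ha.trans hx.1)).deriv]
    exact hd x hx

lemma Gp_anti {c s t : ℝ} (hc : 0 < c) (hcs : c ≤ s) (hst : s ≤ t) :
    c*(1 - 1/t) - Real.log t ≤ c*(1 - 1/s) - Real.log s := by
  have hs0 : 0 < s := hc.trans_le hcs
  have ht0 : 0 < t := hs0.trans_le hst
  have hlog : 1 - s/t ≤ Real.log t - Real.log s := by
    have h := log_ge_one_sub_inv (x := t/s) (by positivity)
    rw [Real.log_div ht0.ne' hs0.ne', one_div_div] at h
    linarith
  have hkey : (1 - s/t) - (c/s - c/t) = (s-c)*(t-s)/(s*t) := by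
    field_simp
  have h2 : 0 ≤ (s-c)*(t-s)/(s*t) :=
    div_nonneg (mul_nonneg (by linarith) (by linarith)) (by positivity)
  have h3 : c/s - c/t ≤ Real.log t - Real.log s := by linarith
  have e1 : c*(1 - 1/t) = c - c/t := by ring
  have e2 : c*(1 - 1/s) = c - c/s := by ring
  linarith

lemma std_ineq1 {z : ℝ} (hz : 1 ≤ z) : 2*(z-1) ≤ (z+1)*Real.log z := by
  have hlog : ContinuousOn Real.log (Set.Icc 1 z) :=
    Real.continuousOn_log.mono (fun x hx => by
      simp only [Set.mem_compl_iff, Set.mem_singleton_iff]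
      exact ne_of_gt (lt_of_lt_of_le one_pos hx.1))
  have hmono : MonotoneOn (fun x => (x+1)*Real.log x - 2*(x-1)) (Set.Icc 1 z) := by
    apply monotoneOn_of_deriv_nonneg (convex_Icc 1 z)
    · exact (((continuousOn_id.add continuousOn_const).mul hlog).sub
        (continuousOn_const.mul (continuousOn_id.sub continuousOn_const)))
    · rw [interior_Icc]
      intro x hx
      have hx0 : (0:ℝ) < x := lt_trans one_pos hx.1
      exact ((((hasDerivAt_id x).add_const 1).mul (Real.hasDerivAt_log hx0.ne')).sub
        (((hasDerivAt_id x).sub_const 1).const_mul 2)).differentiableAt.differentiableWithinAt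
    · rw [interior_Icc]
      intro x hx
      have hx0 : (0:ℝ) < x := lt_trans one_pos hx.1
      have hD : HasDerivAt (fun x => (x+1)*Real.log x - 2*(x-1))
          (1 * Real.log x + (x+1)*x⁻¹ - 2*1) x :=
        (((hasDerivAt_id x).add_const 1).mul (Real.hasDerivAt_log hx0.ne')).sub
          (((hasDerivAt_id x).sub_const 1).const_mul 2)
      rw [hD.deriv]
      have h := log_ge_one_sub_inv hx0
      have e : (x+1)*x⁻¹ = 1 + 1/x := by field_simp
      rw [e]
      linarith
  have h := hmono (Set.left_mem_Icc.2 hz) (Set.right_mem_Icc.2 hz) hz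
  simp only [Real.log_one] at h
  linarith

lemma std_ineq2 {z : ℝ} (hz : 1 ≤ z) : 2*z*Real.log z ≤ z^2 - 1 := by
  have hlog : ContinuousOn Real.log (Set.Icc 1 z) :=
    Real.continuousOn_log.mono (fun x hx => by
      simp only [Set.mem_compl_iff, Set.mem_singleton_iff]
      exact ne_of_gt (lt_of_lt_of_le one_pos hx.1))
  have hmono : MonotoneOn (fun x => x*x - 1 - 2*x*Real.log x) (Set.Icc 1 z) := by
    apply monotoneOn_of_deriv_nonneg (convex_Icc 1 z)
    · exact ((continuousOn_id.mul continuousOn_id).sub continuousOn_const).sub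
        ((continuousOn_const.mul continuousOn_id).mul hlog)
    · rw [interior_Icc]
      intro x hx
      have hx0 : (0:ℝ) < x := lt_trans one_pos hx.1
      exact ((((hasDerivAt_id x).mul (hasDerivAt_id x)).sub_const 1).sub
        ((((hasDerivAt_id x).const_mul 2).mul (Real.hasDerivAt_log hx0.ne')))).differentiableAt.differentiableWithinAt
    · rw [interior_Icc]
      intro x hx
      have hx0 : (0:ℝ) < x := lt_trans one_pos hx.1
      have hD : HasDerivAt (fun x => x*x - 1 - 2*x*Real.log x)
          (1*x + x*1 - (2*1*Real.log x + 2*x*x⁻¹)) x :=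
        (((hasDerivAt_id x).mul (hasDerivAt_id x)).sub_const 1).sub
          ((((hasDerivAt_id x).const_mul 2).mul (Real.hasDerivAt_log hx0.ne')))
      rw [hD.deriv]
      have h := Real.log_le_sub_one_of_pos hx0
      have e : 2*x*x⁻¹ = 2 := by field_simp
      nlinarith [hx.1]
  have h := hmono (Set.left_mem_Icc.2 hz) (Set.right_mem_Icc.2 hz) hz
  simp only [Real.log_one] at h
  nlinarith

lemma key_pointwise {z c t : ℝ} (hz : 1 < z) (hc1 : 1 ≤ c) (hcz : c ≤ z)
    (hce : c * (z - 1 - Real.log z) = z * Real.log z - z + 1)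
    (ht : 0 < t) (htz : t ≤ z) :
    t * Real.log t - t + 1 ≤ c * (t - 1 - Real.log t) := by
  have hc0 : (0:ℝ) < c := lt_of_lt_of_le one_pos hc1
  -- G c ≥ 0 : monotone on [1, c]
  have hGc : 0 ≤ c*(c - 1 - Real.log c) - (c*Real.log c - c + 1) := by
    have hmono := G_mono (c := c) one_pos (a := 1) (b := c) (fun x hx => by
      have hx0 : (0:ℝ) < x := lt_trans one_pos hx.1
      have hlog := Real.log_le_sub_one_of_pos hx0
      have hxc : x ≤ c := hx.2.le
      have hpos : 0 ≤ 1 - 1/x := by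
        rw [sub_nonneg, div_le_one hx0]; linarith [hx.1]
      have h3 : x*(1 - 1/x) = x - 1 := by field_simp
      nlinarith)
    have := hmono (Set.left_mem_Icc.2 hc1) (Set.right_mem_Icc.2 hc1) hc1
    simp only [Real.log_one] at this
    linarith
  rcases le_total t 1 with h1 | h1
  · -- antitone on [t, 1]
    have hanti := G_anti (c := c) ht (a := t) (b := 1) (fun x hx => by
      have hx0 : (0:ℝ) < x := lt_trans ht hx.1
      have hlog := log_ge_one_sub_inv hx0
      have hneg : 1 - 1/x ≤ 0 := by
        rw [sub_nonpos, le_div_iff₀ hx0]; linarith [hx.2]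
      nlinarith)
    have := hanti (Set.left_mem_Icc.2 h1) (Set.right_mem_Icc.2 h1) h1
    simp only [Real.log_one] at this
    linarith
  · rcases le_total t c with h2 | h2
    · -- monotone on [1, t], t ≤ c
      have hmono := G_mono (c := c) one_pos (a := 1) (b := t) (fun x hx => by
        have hx0 : (0:ℝ) < x := lt_trans one_pos hx.1
        have hlog := Real.log_le_sub_one_of_pos hx0
        have hxc : x ≤ c := hx.2.le.trans h2
        have hpos : 0 ≤ 1 - 1/x := by
          rw [sub_nonneg, div_le_one hx0]; linarith [hx.1]
        have h3 : x*(1 - 1/x) = x - 1 := by field_simp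
        nlinarith)
      have := hmono (Set.left_mem_Icc.2 h1) (Set.right_mem_Icc.2 h1) h1
      simp only [Real.log_one] at this
      linarith
    · -- c ≤ t ≤ z
      by_cases hd : 0 ≤ c*(1 - 1/t) - Real.log t
      · -- monotone on [c, t]
        have hmono := G_mono (c := c) hc0 (a := c) (b := t) (fun x hx => by
          have := Gp_anti hc0 hx.1.le hx.2.le
          linarith)
        have := hmono (Set.left_mem_Icc.2 h2) (Set.right_mem_Icc.2 h2) h2
        simp only at this
        linarith
      · -- antitone on [t, z]
        push_neg at hd
        have hanti := G_anti (c := c) ht (a := t) (b := z) (fun x hx => by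
          exact (Gp_anti hc0 h2 hx.1.le).trans hd.le)
        have := hanti (Set.left_mem_Icc.2 htz) (Set.right_mem_Icc.2 htz) htz
        simp only at this
        nlinarith

theorem kl_le_kappa1_mul_reverse_kl
    {A : Type*} [Fintype A] [Nonempty A]
    (P Q : A → ℝ)
    (hP_pos : ∀ a, 0 < P a) (hQ_pos : ∀ a, 0 < Q a)
    (hP_sum : ∑ a, P a = 1) (hQ_sum : ∑ a, Q a = 1)
    (hne : P ≠ Q)
    (ζ : ℝ) (hζ : ζ = Finset.univ.sup' Finset.univ_nonempty (fun a => P a / Q a)) :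
    ∑ a, P a * Real.log (P a / Q a) ≤
      ((ζ * Real.log ζ + 1 - ζ) / ((ζ - 1) - Real.log ζ)) *
        ∑ a, Q a * Real.log (Q a / P a) := by
  -- ζ > 1
  have hex : ∃ a, Q a < P a := by
    by_contra h
    push_neg at h
    apply hne
    funext a
    by_contra hne_a
    have hlt : P a < Q a := lt_of_le_of_ne (h a) hne_a
    have := Finset.sum_lt_sum (fun i (_ : i ∈ Finset.univ) => h i)
      ⟨a, Finset.mem_univ a, hlt⟩
    rw [hP_sum, hQ_sum] at this
    exact lt_irrefl 1 this
  obtain ⟨a0, ha0⟩ := hex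
  have hζ1 : 1 < ζ := by
    rw [hζ]
    have h1 : 1 < P a0 / Q a0 := (one_lt_div (hQ_pos a0)).2 ha0
    exact lt_of_lt_of_le h1 (Finset.le_sup' (fun a => P a / Q a) (Finset.mem_univ a0))
  have hra : ∀ a, P a / Q a ≤ ζ := fun a => by
    rw [hζ]; exact Finset.le_sup' (fun a => P a / Q a) (Finset.mem_univ a)
  have hψζ : 0 < ζ - 1 - Real.log ζ := by
    have := Real.log_lt_sub_one_of_pos (by linarith : (0:ℝ) < ζ) (ne_of_gt hζ1)
    linarith
  set c : ℝ := (ζ * Real.log ζ + 1 - ζ) / ((ζ - 1) - Real.log ζ) with hc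
  have hce : c * (ζ - 1 - Real.log ζ) = ζ * Real.log ζ - ζ + 1 := by
    rw [hc]
    field_simp
    ring
  have hc1 : (1:ℝ) ≤ c := by
    rw [hc, le_div_iff₀ (by linarith : (0:ℝ) < (ζ - 1) - Real.log ζ)]
    have := std_ineq1 hζ1.le
    linarith
  have hcz : c ≤ ζ := by
    rw [hc, div_le_iff₀ (by linarith : (0:ℝ) < (ζ - 1) - Real.log ζ)]
    have := std_ineq2 hζ1.le
    nlinarith
  have hpt : ∀ a ∈ Finset.univ, P a * Real.log (P a / Q a) - P a + Q a ≤
      c * (Q a * Real.log (Q a / P a) + P a - Q a) := by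
    intro a _
    have ht : 0 < P a / Q a := div_pos (hP_pos a) (hQ_pos a)
    have hk := key_pointwise hζ1 hc1 hcz hce ht (hra a)
    have hmul := mul_le_mul_of_nonneg_left hk (hQ_pos a).le
    have hlogr : Real.log (Q a / P a) = -Real.log (P a / Q a) := by
      rw [Real.log_div (hQ_pos a).ne' (hP_pos a).ne',
        Real.log_div (hP_pos a).ne' (hQ_pos a).ne']
      ring
    have hQr : Q a * (P a / Q a) = P a := by
      rw [mul_div_assoc', mul_comm, mul_div_assoc, div_self (hQ_pos a).ne', mul_one]
    have e1 : Q a * (P a / Q a * Real.log (P a / Q a) - P a / Q a + 1) =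
        P a * Real.log (P a / Q a) - P a + Q a := by
      linear_combination (Real.log (P a / Q a) - 1) * hQr
    have e2 : Q a * (c * (P a / Q a - 1 - Real.log (P a / Q a))) =
        c * (Q a * Real.log (Q a / P a) + P a - Q a) := by
      rw [hlogr]
      linear_combination c * hQr
    linarith
  have hsum := Finset.sum_le_sum hpt
  have hL : ∑ a, (P a * Real.log (P a / Q a) - P a + Q a) =
      ∑ a, P a * Real.log (P a / Q a) := by
    rw [Finset.sum_add_distrib, Finset.sum_sub_distrib, hP_sum, hQ_sum]
    ring
  have hR : ∑ a, c * (Q a * Real.log (Q a / P a) + P a - Q a) =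
      c * ∑ a, Q a * Real.log (Q a / P a) := by
    rw [← Finset.mul_sum]
    congr 1
    rw [Finset.sum_sub_distrib, Finset.sum_add_distrib, hP_sum, hQ_sum]
    ring
  rw [hL, hR] at hsum
  exact hsum
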